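/- Let (x_i(t)) be nonnegative reals with x_i(t+1) ≤ Σ_{j ∈ N_i(t)} w_{ij}(t) x_j(t), Σ_j w_{ij}(t) = 1, and w_{ij}(t) ≥ δ > 0 for j ∈ N_i(t). Suppose there is M ∈ ℕ such that for all sufficiently large t and all i, j, j meets i on some interval [t, t'] with t' − t ≤ M. Then every x_i(t) converges to the common limit m(∞) = lim_t max_i x_i(t). -/

import Mathlib

open Filter Topology

/-- `MeetsF N i j m₁ m₂` : there is a sequence `l` with `l m₁ = i`, `l m₂ = j` and
`l s ∈ N (l (s+1)) s` for every `s ∈ [m₁, m₂ - 1]`. -/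
def MeetsF {V : Type*} (N : V → ℕ → Finset V) (i j : V) (m₁ m₂ : ℕ) : Prop :=
  ∃ l : ℕ → V, l m₁ = i ∧ l m₂ = j ∧ ∀ s, m₁ ≤ s → s < m₂ → l s ∈ N (l (s + 1)) s

theorem stmt_13 {V : Type*} [Fintype V] [Nonempty V]
    (N : V → ℕ → Finset V) (hself : ∀ (i : V) (t : ℕ), i ∈ N i t)
    (w : V → V → ℕ → ℝ) (δ : ℝ) (hδ : 0 < δ)
    (hw0 : ∀ i j t, 0 ≤ w i j t)
    (hwδ : ∀ i j t, j ∈ N i t → δ ≤ w i j t)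
    (hwz : ∀ i j t, j ∉ N i t → w i j t = 0)
    (hw1 : ∀ i t, ∑ j ∈ N i t, w i j t = 1)
    (x : V → ℕ → ℝ) (hx0 : ∀ i t, 0 ≤ x i t)
    (hupd : ∀ i t, x i (t + 1) ≤ ∑ j ∈ N i t, w i j t * x j t)
    (M : ℕ)
    (hmeet : ∃ T : ℕ, ∀ t, T ≤ t → ∀ i j : V,
      ∃ t', t ≤ t' ∧ t' - t ≤ M ∧ MeetsF N j i t t') :
    ∃ a : ℝ,
      Tendsto (fun t => Finset.univ.sup' Finset.univ_nonempty fun i => x i t) atTop (𝓝 a) ∧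
      ∀ i : V, Tendsto (fun t => x i t) atTop (𝓝 a) := by
  classical
  set m : ℕ → ℝ := fun t => Finset.univ.sup' Finset.univ_nonempty fun i => x i t with hm
  have hle : ∀ i t, x i t ≤ m t := fun i t => Finset.le_sup' (fun i => x i t) (Finset.mem_univ i)
  have hanti : Antitone m := by
    apply antitone_nat_of_succ_le
    intro t
    apply Finset.sup'_le
    intro i _
    calc x i (t+1) ≤ ∑ j ∈ N i t, w i j t * x j t := hupd i t
      _ ≤ ∑ j ∈ N i t, w i j t * m t :=
          Finset.sum_le_sum fun j _ => mul_le_mul_of_nonneg_left (hle j t) (hw0 i j t)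
      _ = m t := by rw [← Finset.sum_mul, hw1 i t, one_mul]
  have hm0 : ∀ t, 0 ≤ m t := fun t =>
    le_trans (hx0 (Classical.arbitrary V) t) (hle _ t)
  have hbdd : BddBelow (Set.range m) := ⟨0, by rintro y ⟨t, rfl⟩; exact hm0 t⟩
  have ha : Tendsto m atTop (𝓝 (⨅ t, m t)) := tendsto_atTop_ciInf hanti hbdd
  set a := ⨅ t, m t with hadef
  have step : ∀ (c : ℝ) (i j : V) (s : ℕ), m s ≤ c → j ∈ N i s →
      δ * (c - x j s) ≤ c - x i (s+1) := by
    intro c i j s hms hj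
    have h3 : w i j s + ∑ k ∈ (N i s).erase j, w i k s = 1 := by
      rw [Finset.add_sum_erase _ (fun k => w i k s) hj, hw1]
    have h1 : x i (s+1) ≤ w i j s * x j s + (1 - w i j s) * c := by
      calc x i (s+1) ≤ ∑ k ∈ N i s, w i k s * x k s := hupd i s
        _ = w i j s * x j s + ∑ k ∈ (N i s).erase j, w i k s * x k s :=
            (Finset.add_sum_erase _ _ hj).symm
        _ ≤ w i j s * x j s + ∑ k ∈ (N i s).erase j, w i k s * c := by
            refine add_le_add (le_refl _) (Finset.sum_le_sum fun k _ => ?_)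
            exact mul_le_mul_of_nonneg_left (le_trans (hle k s) hms) (hw0 i k s)
        _ = w i j s * x j s + (1 - w i j s) * c := by
            rw [← Finset.sum_mul]
            congr 1
            congr 1
            linarith
    have hsub : (0:ℝ) ≤ c - x j s := sub_nonneg.2 (le_trans (hle j s) hms)
    have hprod := mul_le_mul_of_nonneg_right (hwδ i j s hj) hsub
    nlinarith [hprod, h1]
  have chain : ∀ (c : ℝ) (t₁ : ℕ), (∀ s, t₁ ≤ s → m s ≤ c) →
      ∀ (n : ℕ) (l : ℕ → V), (∀ s, t₁ ≤ s → s < t₁ + n → l s ∈ N (l (s+1)) s) →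
      δ ^ n * (c - x (l t₁) t₁) ≤ c - x (l (t₁ + n)) (t₁ + n) := by
    intro c t₁ hc n
    induction n with
    | zero => intro l _; simp
    | succ n ih =>
      intro l hl
      have h1 := ih l (fun s hs hs' => hl s hs (by omega))
      have h2 := step c (l (t₁+n+1)) (l (t₁+n)) (t₁+n) (hc _ (by omega))
        (hl (t₁+n) (by omega) (by omega))
      calc δ^(n+1) * (c - x (l t₁) t₁) = δ * (δ^n * (c - x (l t₁) t₁)) := by ring
        _ ≤ δ * (c - x (l (t₁+n)) (t₁+n)) := mul_le_mul_of_nonneg_left h1 hδ.le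
        _ ≤ c - x (l (t₁+n+1)) (t₁+n+1) := h2
  obtain ⟨T, hT⟩ := hmeet
  have hkey : ∀ t, T ≤ t → ∀ j, δ^M * (m t - x j t) ≤ m t - m (t + M) := by
    intro t ht j
    obtain ⟨i₀, -, hi₀⟩ := Finset.exists_mem_eq_sup' (Finset.univ_nonempty (α := V))
      (fun i => x i (t+M))
    obtain ⟨t', htt', htM, l, hl1, hl2, hl3⟩ := hT t ht i₀ j
    have ht'le : t' ≤ t + M := by omega
    set l' : ℕ → V := fun s => if s < t' then l s else i₀ with hl'
    have hl't : l' t = j := by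
      by_cases h : t < t'
      · simp [hl', h, hl1]
      · have heq : t = t' := le_antisymm htt' (not_lt.1 h)
        simp only [hl', if_neg h]
        rw [← hl2, ← heq, hl1]
    have hl'M : l' (t+M) = i₀ := by
      have h : ¬ (t + M < t') := by omega
      simp [hl', h]
    have hl'chain : ∀ s, t ≤ s → s < t + M → l' s ∈ N (l' (s+1)) s := by
      intro s hs hsM
      by_cases h2 : s < t'
      · by_cases h : s + 1 < t'
        · simpa [hl', h, h2] using hl3 s hs h2
        · have hst : s + 1 = t' := by omega
          have hls : l' s = l s := by simp [hl', h2]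
          have hls1 : l' (s+1) = i₀ := by simp [hl', h]
          rw [hls, hls1, ← hl2, ← hst]
          exact hl3 s hs h2
      · have h3 : ¬ (s+1 < t') := by omega
        simp only [hl', if_neg h2, if_neg h3]
        exact hself i₀ s
    have hchain := chain (m t) t (fun s hs => hanti hs) M l' hl'chain
    rw [hl't, hl'M] at hchain
    have hmM : m (t+M) = x i₀ (t+M) := hi₀
    rw [hmM]
    exact hchain
  refine ⟨a, ha, fun j => ?_⟩
  have hdiff : Tendsto (fun t => m t - m (t+M)) atTop (𝓝 0) := by
    have h2 : Tendsto (fun t => m (t+M)) atTop (𝓝 a) :=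
      ha.comp (tendsto_add_atTop_nat M)
    simpa using ha.sub h2
  have hδM : (0:ℝ) < δ^M := pow_pos hδ M
  have h0 : Tendsto (fun t => δ^M * (m t - x j t)) atTop (𝓝 0) := by
    apply tendsto_of_tendsto_of_tendsto_of_le_of_le' tendsto_const_nhds hdiff
    · exact Eventually.of_forall fun t => mul_nonneg hδM.le (sub_nonneg.2 (hle j t))
    · exact eventually_atTop.2 ⟨T, fun t ht => hkey t ht j⟩
  have h1 : Tendsto (fun t => m t - x j t) atTop (𝓝 0) := by
    have h2 := h0.const_mul ((δ^M)⁻¹)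
    simpa [← mul_assoc, inv_mul_cancel₀ hδM.ne'] using h2
  have h4 := ha.sub h1
  simpa using h4
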